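/- arXiv:1005.4293 — 9 statements merged into one kernel-verified Lean document; each statement's English description precedes it below -/
import Mathlib

section
/- For integers 1 ≤ k ≤ n and real x ∈ [0,1], q ∈ (0,1), the derivative with respect to x of the modified q-Bernstein polynomial satisfies d/dx B_{k,n}(x,q) = n · (q^x · B_{k-1,n-1}(x,q) − q^{1-x} · B_{k,n-1}(x,q)) · (ln q)/(q−1). -/
open Finset Real

noncomputable def qnum (q x : ℝ) : ℝ := (1 - q ^ x) / (1 - q)

noncomputable def qB (k n : ℕ) (x q : ℝ) : ℝ :=
  (n.choose k : ℝ) * qnum q x ^ k * qnum q (1 - x) ^ (n - k)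

lemma qnum_deriv (q x : ℝ) (hq : 0 < q) :
    HasDerivAt (fun y => qnum q y) (q ^ x * Real.log q / (q - 1)) x := by
  have h : HasDerivAt (fun y : ℝ => q ^ y) (q ^ x * Real.log q) x :=
    (Real.hasStrictDerivAt_const_rpow hq x).hasDerivAt
  have h2 : HasDerivAt (fun y : ℝ => (1 - q ^ y) / (1 - q))
      ((0 - q ^ x * Real.log q) / (1 - q)) x :=
    ((hasDerivAt_const x (1:ℝ)).sub h).div_const _
  convert h2 using 1
  · rfl
  rw [show q - 1 = -(1 - q) by ring, div_neg]
  ring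

lemma qnum_deriv' (q x : ℝ) (hq : 0 < q) :
    HasDerivAt (fun y => qnum q (1 - y)) (-(q ^ (1 - x) * Real.log q / (q - 1))) x := by
  have h := (qnum_deriv q (1 - x) hq).scomp x
    (((hasDerivAt_const x (1:ℝ)).sub (hasDerivAt_id' x)))
  simpa [Function.comp_def] using h

theorem stmt1 (k n : ℕ) (hk : 1 ≤ k) (hkn : k ≤ n) (x q : ℝ)
    (hx : x ∈ Set.Icc (0:ℝ) 1) (hq : q ∈ Set.Ioo (0:ℝ) 1) :
    HasDerivAt (fun y => qB k n y q)
      ((n : ℝ) * (q ^ x * qB (k - 1) (n - 1) x q - q ^ (1 - x) * qB k (n - 1) x q) *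
        (Real.log q / (q - 1))) x := by
  obtain ⟨k₀, rfl⟩ := Nat.exists_eq_add_of_le' hk
  obtain ⟨m, rfl⟩ := Nat.exists_eq_add_of_le hkn
  have hf := qnum_deriv q x hq.1
  have hg := qnum_deriv' q x hq.1
  have hd : HasDerivAt (fun y => qB (k₀ + 1) (k₀ + 1 + m) y q)
      ((((k₀ + 1 + m).choose (k₀ + 1) : ℝ)) *
        (((k₀+1:ℕ) : ℝ) * qnum q x ^ k₀ * (q ^ x * Real.log q / (q - 1)) * qnum q (1 - x) ^ m
          + qnum q x ^ (k₀+1) * ((m:ℕ) * qnum q (1 - x) ^ (m-1) * (-(q ^ (1-x) * Real.log q / (q - 1)))))) x := by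
    have : (fun y => qB (k₀ + 1) (k₀ + 1 + m) y q)
        = fun y => ((k₀ + 1 + m).choose (k₀ + 1) : ℝ) * (qnum q y ^ (k₀+1) * qnum q (1 - y) ^ m) := by
      funext y
      simp [qB]
      ring
    rw [this]
    have h1 : HasDerivAt (fun y : ℝ => qnum q y ^ (k₀+1))
        (((k₀+1:ℕ) : ℝ) * qnum q x ^ k₀ * (q ^ x * Real.log q / (q - 1))) x := by
      simpa using hf.fun_pow (k₀+1)
    have h2 : HasDerivAt (fun y : ℝ => qnum q (1 - y) ^ m)
        (((m:ℕ) : ℝ) * qnum q (1 - x) ^ (m-1) * (-(q ^ (1-x) * Real.log q / (q - 1)))) x := hg.fun_pow m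
    have := (h1.fun_mul h2).const_mul (((k₀ + 1 + m).choose (k₀ + 1) : ℝ))
    convert this using 1
  convert hd using 1
  simp only [qB, Nat.add_sub_cancel, Nat.succ_sub_one, show k₀ + 1 + m - 1 = k₀ + m from by omega,
    show k₀ + 1 + m - (k₀ + 1) = m from by omega, show k₀ + m - k₀ = m from by omega,
    show k₀ + m - (k₀ + 1) = m - 1 from by omega]
  rcases m with _ | m'
  · simp [Nat.choose_self]
    ring
  · simp only [show k₀ + 1 + (m' + 1) = k₀ + m' + 1 + 1 from by omega, Nat.succ_sub_one]
    have h1 := congrArg (Nat.cast : ℕ → ℝ) (Nat.add_one_mul_choose_eq (k₀+m'+1) k₀)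
    have h2 := congrArg (Nat.cast : ℕ → ℝ) (Nat.add_one_mul_choose_eq (k₀+m'+1) (k₀+1))
    have h3' := Nat.choose_succ_right_eq (k₀+m'+1+1) (k₀+1)
    rw [show k₀+m'+1+1-(k₀+1) = m'+1 from by omega] at h3'
    have h3 := congrArg (Nat.cast : ℕ → ℝ) h3'
    push_cast [Nat.succ_eq_add_one] at h1 h2 h3
    push_cast
    linear_combination (norm := ring_nf) (q ^ x * qnum q x ^ k₀ * qnum q (1-x) ^ (m'+1) * (Real.log q / (q-1))) * h1
      - (q ^ (1-x) * qnum q x ^ (k₀+1) * qnum q (1-x) ^ m' * (Real.log q / (q-1))) * (h2 + h3)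
end

section
/- For a positive integer n, x ∈ [0,1], and q ∈ (0,1), Σ_{k=0}^n (k/n) · B_{k,n}(x,q) = [x]_q · ([x]_q + [1−x]_q)^{n−1}. -/
open Finset Real

lemma key (m : ℕ) (a b : ℝ) :
    ∑ k ∈ Finset.range (m + 2), (k : ℝ) * ((m+1).choose k : ℝ) * a ^ k * b ^ (m + 1 - k) =
      (m + 1 : ℝ) * a * (a + b) ^ m := by
  rw [Finset.sum_range_succ']
  simp only [Nat.cast_zero, zero_mul]
  have h : ∀ j ∈ Finset.range (m + 1),
      ((j+1 : ℕ) : ℝ) * ((m+1).choose (j+1) : ℝ) * a ^ (j+1) * b ^ (m + 1 - (j+1)) =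
      (m + 1 : ℝ) * a * (((m.choose j : ℝ)) * a ^ j * b ^ (m - j)) := by
    intro j hj
    have hc : ((m+1).choose (j+1) : ℝ) * ((j:ℝ) + 1) = ((m:ℝ) + 1) * (m.choose j : ℝ) := by
      have := (Nat.add_one_mul_choose_eq m j).symm
      exact_mod_cast this
    have hs : m + 1 - (j+1) = m - j := by omega
    rw [hs]
    push_cast
    linear_combination (a ^ (j+1) * b ^ (m - j)) * hc
  rw [Finset.sum_congr rfl h, ← Finset.mul_sum, add_pow]
  rw [add_zero]
  congr 1
  exact Finset.sum_congr rfl fun j _ => by ring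
theorem stmt5 (n : ℕ) (hn : 1 ≤ n) (x q : ℝ)
    (hx : x ∈ Set.Icc (0:ℝ) 1) (hq : q ∈ Set.Ioo (0:ℝ) 1) :
    ∑ k ∈ Finset.range (n + 1), ((k : ℝ) / (n : ℝ)) * qB k n x q =
      qnum q x * (qnum q x + qnum q (1 - x)) ^ (n - 1) := by
  obtain ⟨m, rfl⟩ : ∃ m, n = m + 1 := ⟨n - 1, by omega⟩
  simp only [qB, Nat.add_sub_cancel]
  have := key m (qnum q x) (qnum q (1 - x))
  have hsum : ∑ k ∈ Finset.range (m + 1 + 1), ((k : ℝ) / ((m+1 : ℕ) : ℝ)) *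
      (((m+1).choose k : ℝ) * qnum q x ^ k * qnum q (1 - x) ^ (m + 1 - k)) =
      (1 / ((m+1 : ℕ) : ℝ)) * ∑ k ∈ Finset.range (m + 2),
        (k : ℝ) * ((m+1).choose k : ℝ) * qnum q x ^ k * qnum q (1 - x) ^ (m + 1 - k) := by
    rw [Finset.mul_sum]
    apply Finset.sum_congr rfl
    intro k hk; ring
  rw [hsum, this]
  have : ((m+1 : ℕ) : ℝ) ≠ 0 := by positivity
  push_cast at this ⊢
  field_simp
end

section
/- For integers n ≥ 2, x ∈ [0,1], and q ∈ (0,1), Σ_{k=2}^n (C(k,2)/C(n,2)) · B_{k,n}(x,q) = [x]_q^2 · ([x]_q + [1−x]_q)^{n−2}. -/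
open Finset Real

theorem stmt6 (n : ℕ) (hn : 2 ≤ n) (x q : ℝ)
    (hx : x ∈ Set.Icc (0:ℝ) 1) (hq : q ∈ Set.Ioo (0:ℝ) 1) :
    ∑ k ∈ Finset.Icc 2 n, ((k.choose 2 : ℝ) / (n.choose 2 : ℝ)) * qB k n x q =
      qnum q x ^ 2 * (qnum q x + qnum q (1 - x)) ^ (n - 2) := by
  set a := qnum q x
  set b := qnum q (1 - x)
  have hC : (0:ℝ) < (n.choose 2 : ℝ) := by
    exact_mod_cast Nat.choose_pos hn
  have key : ∀ k ∈ Finset.Icc 2 n,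
      ((k.choose 2 : ℝ) / (n.choose 2 : ℝ)) * qB k n x q
        = ((n-2).choose (k-2) : ℝ) * a ^ k * b ^ (n - k) := by
    intro k hk
    rw [Finset.mem_Icc] at hk
    have h := Nat.choose_mul (n := n) hk.1
    have h' : ((n.choose k : ℕ) : ℝ) * (k.choose 2 : ℝ)
        = (n.choose 2 : ℝ) * ((n-2).choose (k-2) : ℝ) := by exact_mod_cast h
    have hcoef : ((k.choose 2 : ℝ) / (n.choose 2 : ℝ)) * (n.choose k : ℝ)
        = ((n-2).choose (k-2) : ℝ) := by
      rw [div_mul_eq_mul_div, div_eq_iff hC.ne']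
      linear_combination h'
    unfold qB
    rw [← hcoef]
    ring
  rw [Finset.sum_congr rfl key]
  have hre : ∑ k ∈ Finset.Icc 2 n, ((n-2).choose (k-2) : ℝ) * a ^ k * b ^ (n - k)
      = ∑ j ∈ Finset.range (n - 1), ((n-2).choose j : ℝ) * a ^ (j+2) * b ^ (n - 2 - j) := by
    refine Finset.sum_nbij' (fun k => k - 2) (fun j => j + 2) ?_ ?_ ?_ ?_ ?_
    · intro k hk; rw [Finset.mem_Icc] at hk; rw [Finset.mem_range]; omega
    · intro j hj; rw [Finset.mem_range] at hj; rw [Finset.mem_Icc]; omega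
    · intro k hk; rw [Finset.mem_Icc] at hk; omega
    · intro j hj; rw [Finset.mem_range] at hj; omega
    · intro k hk; rw [Finset.mem_Icc] at hk
      have h1 : k - 2 + 2 = k := by omega
      have h2 : n - 2 - (k - 2) = n - k := by omega
      rw [h1, h2]
  rw [hre, add_pow, Finset.mul_sum]
  have hn2 : n - 2 + 1 = n - 1 := by omega
  rw [hn2]
  refine Finset.sum_congr rfl fun j hj => ?_
  ring
end

section
/- For integers 1 ≤ i ≤ n, x ∈ [0,1], and q ∈ (0,1), the degree evaluation formula Σ_{k=i}^n (C(k,i)/C(n,i)) · B_{k,n}(x,q) = [x]_q^i · ([x]_q + [1−x]_q)^{n−i} holds. -/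
open Finset Real

theorem stmt7 (i n : ℕ) (hi : 1 ≤ i) (hin : i ≤ n) (x q : ℝ)
    (hx : x ∈ Set.Icc (0:ℝ) 1) (hq : q ∈ Set.Ioo (0:ℝ) 1) :
    ∑ k ∈ Finset.Icc i n, ((k.choose i : ℝ) / (n.choose i : ℝ)) * qB k n x q =
      qnum q x ^ i * (qnum q x + qnum q (1 - x)) ^ (n - i) := by
  set a := qnum q x with ha
  set b := qnum q (1 - x) with hb
  have hC : (n.choose i : ℝ) ≠ 0 := Nat.cast_ne_zero.mpr (Nat.choose_pos hin).ne'
  rw [← Finset.Ico_add_one_right_eq_Icc, Finset.sum_Ico_eq_sum_range]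
  have hrange : n + 1 - i = n - i + 1 := by omega
  rw [hrange]
  have key : ∀ j ∈ Finset.range (n - i + 1),
      (((i + j).choose i : ℝ) / (n.choose i : ℝ)) * qB (i + j) n x q =
      a ^ i * (a ^ j * b ^ (n - i - j) * ((n - i).choose j : ℝ)) := by
    intro j hj
    have hj' : j ≤ n - i := by simpa using Nat.lt_succ_iff.mp (Finset.mem_range.mp hj)
    have hkn : i + j ≤ n := by omega
    have hid : n.choose (i + j) * (i + j).choose i = n.choose i * (n - i).choose j := by
      have := Nat.choose_mul (n := n) (Nat.le_add_right i j)
      simpa using this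
    have hidR : ((i + j).choose i : ℝ) * (n.choose (i + j) : ℝ) =
        (n.choose i : ℝ) * ((n - i).choose j : ℝ) := by
      exact_mod_cast by rw [mul_comm]; exact_mod_cast congrArg (Nat.cast (R := ℝ)) hid
    have hsub : n - (i + j) = n - i - j := by omega
    have hr : ((i + j).choose i : ℝ) / (n.choose i : ℝ) * (n.choose (i + j) : ℝ) =
        ((n - i).choose j : ℝ) := by
      field_simp
      linarith [hidR]
    calc (((i + j).choose i : ℝ) / (n.choose i : ℝ)) * qB (i + j) n x q
        = (((i + j).choose i : ℝ) / (n.choose i : ℝ) * (n.choose (i + j) : ℝ)) *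
            (a ^ (i + j) * b ^ (n - i - j)) := by
          rw [qB, hsub, ← ha, ← hb]; ring
      _ = ((n - i).choose j : ℝ) * (a ^ (i + j) * b ^ (n - i - j)) := by rw [hr]
      _ = a ^ i * (a ^ j * b ^ (n - i - j) * ((n - i).choose j : ℝ)) := by
          rw [pow_add]; ring
  rw [Finset.sum_congr rfl key, ← Finset.mul_sum]
  congr 1
  rw [add_pow]
end

section
/- For integers 1 ≤ i ≤ n, x ∈ [0,1), and q ∈ (0,1), [x]_q^i = (1/([x]_q + [1−x]_q)^{n−i}) · Σ_{k=i}^n (C(k,i)/C(n,i)) · B_{k,n}(x,q). Note that [x]_q + [1−x]_q > 0 for x ∈ [0,1] and q ∈ (0,1). -/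
open Finset Real

theorem stmt8 (i n : ℕ) (hi : 1 ≤ i) (hin : i ≤ n) (x q : ℝ)
    (hx : x ∈ Set.Ico (0:ℝ) 1) (hq : q ∈ Set.Ioo (0:ℝ) 1) :
    qnum q x ^ i =
      (1 / (qnum q x + qnum q (1 - x)) ^ (n - i)) *
        ∑ k ∈ Finset.Icc i n, ((k.choose i : ℝ) / (n.choose i : ℝ)) * qB k n x q := by
  obtain ⟨hx0, hx1⟩ := hx
  obtain ⟨hq0, hq1⟩ := hq
  set a := qnum q x with ha
  set b := qnum q (1 - x) with hb
  have ha0 : 0 ≤ a := by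
    apply div_nonneg
    · have : q ^ x ≤ 1 := Real.rpow_le_one hq0.le hq1.le hx0
      linarith
    · linarith
  have hb0 : 0 < b := by
    apply div_pos
    · have : q ^ (1 - x) < 1 := Real.rpow_lt_one hq0.le hq1 (by linarith)
      linarith
    · linarith
  have hab : (0:ℝ) < a + b := by linarith
  have habn : (a + b) ^ (n - i) ≠ 0 := pow_ne_zero _ hab.ne'
  have hCni : (0:ℝ) < (n.choose i : ℝ) := by
    exact_mod_cast Nat.choose_pos hin
  have hsum : ∑ k ∈ Finset.Icc i n, ((k.choose i : ℝ) / (n.choose i : ℝ)) * qB k n x q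
      = a ^ i * (a + b) ^ (n - i) := by
    have : ∀ k ∈ Finset.Icc i n,
        ((k.choose i : ℝ) / (n.choose i : ℝ)) * qB k n x q
          = ((n - i).choose (k - i) : ℝ) * a ^ k * b ^ (n - k) := by
      intro k hk
      simp only [Finset.mem_Icc] at hk
      have h1 : n.choose k * k.choose i = n.choose i * (n - i).choose (k - i) :=
        Nat.choose_mul hk.1
      have h1' : (n.choose k : ℝ) * (k.choose i : ℝ)
          = (n.choose i : ℝ) * ((n - i).choose (k - i) : ℝ) := by exact_mod_cast h1
      simp only [qB, ← ha, ← hb]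
      rw [div_mul_eq_mul_div, div_eq_iff hCni.ne']
      linear_combination (a ^ k * b ^ (n - k)) * h1'
    rw [Finset.sum_congr rfl this,
      show Finset.Icc i n
          = Finset.map ⟨fun j => i + j, add_right_injective i⟩ (Finset.range (n + 1 - i)) by
        ext m
        simp only [Finset.mem_Icc, Finset.mem_map, Finset.mem_range,
          Function.Embedding.coeFn_mk]
        constructor
        · rintro ⟨h1, h2⟩; exact ⟨m - i, by omega, by omega⟩
        · rintro ⟨j, hj, rfl⟩; omega,
      Finset.sum_map]
    simp only [Function.Embedding.coeFn_mk]
    have hre : ∀ j ∈ Finset.range (n + 1 - i),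
        ((n - i).choose (i + j - i) : ℝ) * a ^ (i + j) * b ^ (n - (i + j))
          = a ^ i * (((n-i).choose j : ℝ) * a ^ j * b ^ ((n - i) - j)) := by
      intro j hj
      simp only [Finset.mem_range] at hj
      have : i + j - i = j := by omega
      rw [this]
      have : n - (i + j) = (n - i) - j := by omega
      rw [this, pow_add]
      ring
    rw [Finset.sum_congr rfl hre, ← Finset.mul_sum]
    congr 1
    rw [add_pow]
    have : n + 1 - i = (n - i) + 1 := by omega
    rw [this]
    apply Finset.sum_congr rfl
    intro j hj
    ring
  rw [hsum]
  field_simp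
end

section
/- For integers 0 ≤ k ≤ n−1 with n ≥ 1, x ∈ [0,1], and q ∈ (0,1), the linear combination ((n−k)/n) · B_{k,n}(x,q) + ((k+1)/n) · B_{k+1,n}(x,q) equals B_{k,n−1}(x,q) · (1 + (1−q)·[x]_q·[1−x]_q). -/
open Finset Real

theorem stmt9 (k n : ℕ) (hn : 1 ≤ n) (hk : k ≤ n - 1) (x q : ℝ)
    (hx : x ∈ Set.Icc (0:ℝ) 1) (hq : q ∈ Set.Ioo (0:ℝ) 1) :
    (((n - k : ℕ) : ℝ) / (n : ℝ)) * qB k n x q + (((k + 1 : ℕ) : ℝ) / (n : ℝ)) * qB (k + 1) n x q =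
      qB k (n - 1) x q * (1 + (1 - q) * qnum q x * qnum q (1 - x)) := by
  obtain ⟨m, rfl⟩ : ∃ m, n = m + 1 := ⟨n - 1, (Nat.succ_pred_eq_of_pos hn).symm⟩
  simp only [Nat.add_sub_cancel] at hk ⊢
  set a := qnum q x with ha
  set b := qnum q (1 - x) with hb
  have hq1 : (1 : ℝ) - q ≠ 0 := by
    have := hq.2; intro h; nlinarith
  have key : b + a = 1 + (1 - q) * a * b := by
    rw [ha, hb, qnum, qnum]
    have hpow : q ^ x * q ^ (1 - x) = q := by
      rw [← Real.rpow_add hq.1]; norm_num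
    field_simp
    nlinarith [hpow]
  have h2n : ((m : ℝ) + 1) * m.choose k = (m+1).choose (k+1) * (k+1) := by
    exact_mod_cast congrArg (Nat.cast : ℕ → ℝ) (Nat.add_one_mul_choose_eq m k)
  have h1n : ((m+1).choose (k+1) * (k+1) : ℝ) = (m+1).choose k * (m+1-k : ℕ) := by
    exact_mod_cast congrArg (Nat.cast : ℕ → ℝ) (Nat.choose_succ_right_eq (m+1) k)
  have hmk : m + 1 - k = (m - k) + 1 := by omega
  rw [qB, qB, qB, hmk, pow_succ, pow_succ]
  have hm1 : ((m : ℝ) + 1) ≠ 0 := by positivity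
  rw [hmk] at h1n
  push_cast [Nat.cast_sub hk] at h1n ⊢
  field_simp
  linear_combination (a^k * b^(m-k)) * (b * (h1n.symm.trans h2n.symm) + a * h2n.symm
    + ((m:ℝ)+1) * (m.choose k : ℝ) * key)
end

section
/- For the modified q-Bernstein operator applied to f(x) = x, one has B_{n,q}(f : x) = Σ_{k=0}^n (k/n) · C(n,k) · [x]_q^k · [1−x]_q^{n−k} = [x]_q · (1 − [1−x]_q · [x]_q · (q−1))^{n−1} for n ≥ 1, x ∈ [0,1], q ∈ (0,1). -/
open Finset Real

theorem stmt14 (n : ℕ) (hn : 1 ≤ n) (x q : ℝ)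
    (hx : x ∈ Set.Icc (0:ℝ) 1) (hq : q ∈ Set.Ioo (0:ℝ) 1) :
    ∑ k ∈ Finset.range (n + 1),
        ((k : ℝ) / (n : ℝ)) * (n.choose k : ℝ) * qnum q x ^ k * qnum q (1 - x) ^ (n - k) =
      qnum q x * (1 - qnum q (1 - x) * qnum q x * (q - 1)) ^ (n - 1) := by
  obtain ⟨m, rfl⟩ : ∃ m, n = m + 1 := ⟨n - 1, (Nat.succ_pred_eq_of_pos hn).symm⟩
  set a := qnum q x with ha
  set b := qnum q (1 - x) with hb
  have hq1 : (1 : ℝ) - q ≠ 0 := by nlinarith [hq.2]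
  have hkey : 1 - b * a * (q - 1) = a + b := by
    have hpow : q ^ x * q ^ (1 - x) = q := by
      rw [← Real.rpow_add hq.1]; norm_num
    rw [ha, hb, qnum, qnum]
    field_simp
    linear_combination (1 - q) * hpow
  rw [hkey]
  have hn' : ((m : ℝ) + 1) ≠ 0 := by positivity
  rw [Finset.sum_range_succ']
  have step : ∀ i ∈ Finset.range (m + 1),
      ((↑(i + 1) : ℝ) / (↑(m + 1) : ℝ)) * ((m + 1).choose (i + 1) : ℝ) * a ^ (i + 1) *
          b ^ (m + 1 - (i + 1)) =
        a * (a ^ i * b ^ (m - i) * (m.choose i : ℝ)) := by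
    intro i _
    have hc : ((i : ℝ) + 1) * ((m + 1).choose (i + 1) : ℝ) = ((m : ℝ) + 1) * (m.choose i : ℝ) := by
      have h := Nat.add_one_mul_choose_eq m i
      have h2 : ((m + 1) * m.choose i : ℕ) = ((m + 1).choose (i + 1) * (i + 1) : ℕ) := h
      have h3 : ((m : ℝ) + 1) * (m.choose i : ℝ) = ((m + 1).choose (i + 1) : ℝ) * ((i : ℝ) + 1) := by
        exact_mod_cast congrArg (Nat.cast : ℕ → ℝ) h2
      linarith [h3]
    have hsub : m + 1 - (i + 1) = m - i := by omega
    rw [hsub]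
    push_cast
    field_simp
    linear_combination a ^ (i + 1) * b ^ (m - i) * hc
  rw [Finset.sum_congr rfl step, ← Finset.mul_sum]
  simp [← add_pow]
end

section
/- For a nonnegative integer n, real x, and q ∈ (0,1), the q-power expansion [x]_q^n = Σ_{k=0}^n q^{C(k,2)} · qbinom(x,k) · [k]_q! · S(n,k:q) holds, where qbinom(x,k) = [x]_q[x−1]_q⋯[x−k+1]_q/[k]_q!. -/
open Finset Real

noncomputable def qfact (q : ℝ) : ℕ → ℝ
  | 0 => 1
  | n + 1 => qnum q ((n : ℝ) + 1) * qfact q n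

noncomputable def qbin (q : ℝ) (k j : ℕ) : ℝ := qfact q k / (qfact q j * qfact q (k - j))

noncomputable def qStir (q : ℝ) (n k : ℕ) : ℝ :=
  (∑ j ∈ Finset.range (k + 1),
      (-1 : ℝ) ^ j * q ^ j.choose 2 * qbin q k j * qnum q ((k - j : ℕ) : ℝ) ^ n) /
    (q ^ k.choose 2 * qfact q k)

noncomputable def qbinX (q x : ℝ) (k : ℕ) : ℝ :=
  (∏ i ∈ Finset.range k, qnum q (x - (i : ℝ))) / qfact q k

section Aux
variable {q : ℝ} (hq0 : 0 < q) (hq1 : q < 1)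

lemma qnum_nat (k : ℕ) : qnum q (k : ℝ) = (1 - q ^ k) / (1 - q) := by
  rw [qnum, Real.rpow_natCast]

lemma qnum_zero' : qnum q ((0:ℕ) : ℝ) = 0 := by
  rw [qnum_nat]; simp

include hq0 hq1 in
lemma qnum_nat_pos (k : ℕ) (hk : k ≠ 0) : 0 < qnum q (k : ℝ) := by
  rw [qnum_nat]
  have h1 : q ^ k < 1 := pow_lt_one₀ hq0.le hq1 hk
  have h2 : (0:ℝ) < 1 - q := by linarith
  apply div_pos <;> linarith

lemma qfact_succ (k : ℕ) : qfact q (k+1) = qnum q ((k+1 : ℕ) : ℝ) * qfact q k := by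
  have : ((k+1 : ℕ) : ℝ) = (k : ℝ) + 1 := by push_cast; ring
  rw [this]; rfl

include hq0 hq1 in
lemma qfact_pos (k : ℕ) : 0 < qfact q k := by
  induction k with
  | zero => norm_num [qfact]
  | succ m ih =>
    rw [qfact_succ]
    exact mul_pos (qnum_nat_pos hq0 hq1 (m+1) (by omega)) ih

include hq0 hq1 in
lemma qbin_zero (k : ℕ) : qbin q k 0 = 1 := by
  have := qfact_pos hq0 hq1 k
  simp only [qbin, Nat.sub_zero]
  rw [show qfact q 0 = 1 from rfl]
  field_simp

include hq0 hq1 in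
lemma qbin_self (k : ℕ) : qbin q k k = 1 := by
  have := qfact_pos hq0 hq1 k
  simp only [qbin, Nat.sub_self]
  rw [show qfact q 0 = 1 from rfl]
  field_simp

-- (C)
include hq1 in
lemma qnum_nat_sub (j k : ℕ) (hjk : j ≤ k) :
    qnum q ((k - j : ℕ) : ℝ) = qnum q (k : ℝ) - q ^ (k - j) * qnum q (j : ℝ) := by
  rw [qnum_nat, qnum_nat, qnum_nat]
  have h2 : (1:ℝ) - q ≠ 0 := by linarith
  field_simp
  have : q ^ (k - j) * q ^ j = q ^ k := by rw [← pow_add]; congr 1; omega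
  ring_nf
  nlinarith [this]

end Aux
section Aux2
variable {q : ℝ} (hq0 : 0 < q) (hq1 : q < 1)

include hq0 hq1 in
lemma qbin_pascal (i m : ℕ) (h : i + 1 ≤ m) :
    qbin q (m+1) (i+1) = q ^ (i+1) * qbin q m (i+1) + qbin q m i := by
  have e1 : qfact q (m+1) = qnum q ((m+1 : ℕ):ℝ) * qfact q m := qfact_succ (q := q) m
  have e2 : qfact q (i+1) = qnum q ((i+1 : ℕ):ℝ) * qfact q i := qfact_succ (q := q) i
  have e3 : qfact q (m - i) = qnum q ((m - i : ℕ):ℝ) * qfact q (m - (i+1)) := by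
    have h4 : m - i = (m - (i+1)) + 1 := by omega
    rw [h4, qfact_succ]
  have key : qnum q ((m+1 : ℕ):ℝ) =
      q ^ (i+1) * qnum q ((m - i : ℕ):ℝ) + qnum q ((i+1 : ℕ):ℝ) := by
    rw [qnum_nat, qnum_nat, qnum_nat]
    have h2 : (1:ℝ) - q ≠ 0 := by linarith
    have hpow : q ^ (i+1) * q ^ (m - i) = q ^ (m+1) := by
      rw [← pow_add]; congr 1; omega
    field_simp
    nlinarith [hpow]
  have hsub1 : m + 1 - (i + 1) = m - i := by omega
  simp only [qbin, hsub1, e1, e2, e3, key]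
  set A := qnum q ((i+1 : ℕ):ℝ) with hA
  set B := qnum q ((m - i : ℕ):ℝ) with hB
  set F1 := qfact q i with hF1
  set F2 := qfact q (m - (i+1)) with hF2
  set F3 := qfact q m with hF3
  have hAne : A ≠ 0 := (qnum_nat_pos hq0 hq1 (i+1) (by omega)).ne'
  have hBne : B ≠ 0 := (qnum_nat_pos hq0 hq1 (m - i) (by omega)).ne'
  have hF1ne : F1 ≠ 0 := (qfact_pos hq0 hq1 i).ne'
  have hF2ne : F2 ≠ 0 := (qfact_pos hq0 hq1 (m - (i+1))).ne'
  have hF3ne : F3 ≠ 0 := (qfact_pos hq0 hq1 m).ne'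
  field_simp
  try ring

include hq0 hq1 in
lemma qbin_absorb (i m : ℕ) (h : i ≤ m) :
    qnum q ((i+1 : ℕ):ℝ) * qbin q (m+1) (i+1) = qnum q ((m+1 : ℕ):ℝ) * qbin q m i := by
  have e1 : qfact q (m+1) = qnum q ((m+1 : ℕ):ℝ) * qfact q m := qfact_succ (q := q) m
  have e2 : qfact q (i+1) = qnum q ((i+1 : ℕ):ℝ) * qfact q i := qfact_succ (q := q) i
  have hsub1 : m + 1 - (i + 1) = m - i := by omega
  simp only [qbin, hsub1, e1, e2]
  set A := qnum q ((i+1 : ℕ):ℝ) with hA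
  set C := qnum q ((m+1 : ℕ):ℝ) with hC
  set F1 := qfact q i with hF1
  set F2 := qfact q (m - i) with hF2
  set F3 := qfact q m with hF3
  have hAne : A ≠ 0 := (qnum_nat_pos hq0 hq1 (i+1) (by omega)).ne'
  have hF1ne : F1 ≠ 0 := (qfact_pos hq0 hq1 i).ne'
  have hF2ne : F2 ≠ 0 := (qfact_pos hq0 hq1 (m - i)).ne'
  have hF3ne : F3 ≠ 0 := (qfact_pos hq0 hq1 m).ne'
  field_simp
  try ring

-- (A)
include hq0 hq1 in
lemma qnum_split (x : ℝ) (k : ℕ) :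
    qnum q x = qnum q (k : ℝ) + q ^ k * qnum q (x - (k : ℝ)) := by
  have hpow : q ^ k * q ^ (x - (k:ℝ)) = q ^ x := by
    rw [← Real.rpow_natCast q k, ← Real.rpow_add hq0]
    congr 1; ring
  rw [qnum, qnum_nat, qnum]
  have h2 : (1:ℝ) - q ≠ 0 := by linarith
  field_simp
  nlinarith [hpow]

-- (B)
include hq0 hq1 in
lemma qbinX_succ (x : ℝ) (k : ℕ) :
    qbinX q x k * qnum q (x - (k : ℝ)) = qnum q ((k+1 : ℕ):ℝ) * qbinX q x (k+1) := by
  have e1 : qfact q (k+1) = qnum q ((k+1 : ℕ):ℝ) * qfact q k := qfact_succ (q := q) k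
  have hn : qnum q ((k+1 : ℕ):ℝ) ≠ 0 := (qnum_nat_pos hq0 hq1 (k+1) (by omega)).ne'
  have hF : qfact q k ≠ 0 := (qfact_pos hq0 hq1 k).ne'
  rw [qbinX, qbinX, Finset.prod_range_succ, e1]
  set N := qnum q ((k+1 : ℕ):ℝ) with hN
  set F := qfact q k with hF2
  field_simp

end Aux2
noncomputable def Tq (q : ℝ) (n k : ℕ) : ℝ :=
  ∑ j ∈ Finset.range (k + 1),
    (-1 : ℝ) ^ j * q ^ j.choose 2 * qbin q k j * qnum q ((k - j : ℕ) : ℝ) ^ n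

section Aux3
variable {q : ℝ} (hq0 : 0 < q) (hq1 : q < 1)

lemma choose_two_succ (j : ℕ) : (j+1).choose 2 = j.choose 2 + j := by
  rw [Nat.choose_succ_succ]
  simp [Nat.choose_one_right, Nat.add_comm]

-- (E)
include hq0 hq1 in
lemma alt_sum (m : ℕ) :
    ∑ j ∈ Finset.range (m + 2), (-1 : ℝ) ^ j * q ^ j.choose 2 * qbin q (m+1) j = 0 := by
  set D : ℕ → ℝ := fun j => (-1 : ℝ) ^ j * q ^ j.choose 2 * q ^ j * qbin q m j with hD
  rw [Finset.sum_range_succ, Finset.sum_range_succ']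
  have hstep : ∀ j ∈ Finset.range m,
      (-1 : ℝ) ^ (j+1) * q ^ (j+1).choose 2 * qbin q (m+1) (j+1) = D (j+1) - D j := by
    intro j hj
    rw [Finset.mem_range] at hj
    rw [qbin_pascal hq0 hq1 j m (by omega), hD]
    simp only
    rw [choose_two_succ]
    ring
  rw [Finset.sum_congr rfl hstep, Finset.sum_range_sub D]
  simp only [hD]
  rw [qbin_zero hq0 hq1 (m+1), qbin_zero hq0 hq1 m, qbin_self hq0 hq1 m, qbin_self hq0 hq1 (m+1), choose_two_succ]
  ring

-- T recurrence
include hq0 hq1 in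
lemma Tq_rec (n m : ℕ) :
    Tq q (n+1) (m+1) =
      qnum q ((m+1 : ℕ) : ℝ) * Tq q n (m+1) +
        q ^ m * qnum q ((m+1 : ℕ) : ℝ) * Tq q n m := by
  have step1 : Tq q (n+1) (m+1) =
      qnum q ((m+1 : ℕ) : ℝ) * Tq q n (m+1) -
        ∑ j ∈ Finset.range (m+2),
          (-1 : ℝ) ^ j * q ^ j.choose 2 * (q ^ (m+1-j) * qnum q (j : ℝ) * qbin q (m+1) j) *
            qnum q ((m+1-j : ℕ) : ℝ) ^ n := by
    rw [Tq, Tq, Finset.mul_sum, ← Finset.sum_sub_distrib]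
    apply Finset.sum_congr rfl
    intro j hj
    rw [Finset.mem_range] at hj
    have hsub := qnum_nat_sub (q := q) hq1 j (m+1) (by omega)
    calc (-1 : ℝ) ^ j * q ^ j.choose 2 * qbin q (m+1) j * qnum q ((m+1-j : ℕ) : ℝ) ^ (n+1)
        = (-1 : ℝ) ^ j * q ^ j.choose 2 * qbin q (m+1) j *
            (qnum q ((m+1-j : ℕ) : ℝ) ^ n * qnum q ((m+1-j : ℕ) : ℝ)) := by ring
      _ = _ := by rw [hsub]; push_cast; ring
  rw [step1]
  have step2 : ∑ j ∈ Finset.range (m+2),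
      (-1 : ℝ) ^ j * q ^ j.choose 2 * (q ^ (m+1-j) * qnum q (j : ℝ) * qbin q (m+1) j) *
        qnum q ((m+1-j : ℕ) : ℝ) ^ n
      = - (q ^ m * qnum q ((m+1 : ℕ) : ℝ) * Tq q n m) := by
    rw [Finset.sum_range_succ']
    have h0 : (-1 : ℝ) ^ 0 * q ^ (Nat.choose 0 2) * (q ^ (m+1-0) * qnum q ((0:ℕ) : ℝ) * qbin q (m+1) 0) *
        qnum q ((m+1-0 : ℕ) : ℝ) ^ n = 0 := by
      rw [qnum_zero']
      ring
    rw [h0, add_zero]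
    have hterm : ∀ i ∈ Finset.range (m+1),
        (-1 : ℝ) ^ (i+1) * q ^ (i+1).choose 2 *
            (q ^ (m+1-(i+1)) * qnum q ((i+1 : ℕ) : ℝ) * qbin q (m+1) (i+1)) *
          qnum q ((m+1-(i+1) : ℕ) : ℝ) ^ n
        = - (q ^ m * qnum q ((m+1 : ℕ) : ℝ) *
            ((-1 : ℝ) ^ i * q ^ i.choose 2 * qbin q m i * qnum q ((m - i : ℕ) : ℝ) ^ n)) := by
      intro i hi
      rw [Finset.mem_range] at hi
      have habs := qbin_absorb hq0 hq1 i m (by omega)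
      have hs : m + 1 - (i+1) = m - i := by omega
      rw [hs, choose_two_succ]
      have him : i + (m - i) = m := by omega
      have hpow : q ^ i.choose 2 * q ^ i * q ^ (m - i) = q ^ i.choose 2 * q ^ m := by
        rw [mul_assoc, ← pow_add, him]
      calc (-1 : ℝ) ^ (i+1) * q ^ (i.choose 2 + i) *
              (q ^ (m-i) * qnum q ((i+1 : ℕ) : ℝ) * qbin q (m+1) (i+1)) *
            qnum q ((m-i : ℕ) : ℝ) ^ n
          = -((-1:ℝ)^i * (q ^ i.choose 2 * q ^ i * q ^ (m-i)) *
              (qnum q ((i+1 : ℕ) : ℝ) * qbin q (m+1) (i+1)) * qnum q ((m-i : ℕ) : ℝ) ^ n) := by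
            rw [pow_add]
            ring
        _ = _ := by rw [habs, hpow]; ring
    rw [Finset.sum_congr rfl hterm, Finset.sum_neg_distrib, Tq, Finset.mul_sum]
  rw [step2]
  ring

include hq0 hq1 in
lemma Tq_vanish (n k : ℕ) (h : n < k) : Tq q n k = 0 := by
  induction n generalizing k with
  | zero =>
    obtain ⟨m, rfl⟩ : ∃ m, k = m + 1 := ⟨k - 1, by omega⟩
    rw [Tq]
    have : ∀ j ∈ Finset.range (m+2),
        (-1 : ℝ) ^ j * q ^ j.choose 2 * qbin q (m+1) j * qnum q ((m+1-j : ℕ) : ℝ) ^ 0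
        = (-1 : ℝ) ^ j * q ^ j.choose 2 * qbin q (m+1) j := by
      intro j hj; rw [pow_zero, mul_one]
    rw [Finset.sum_congr rfl this]
    exact alt_sum hq0 hq1 m
  | succ n ih =>
    obtain ⟨m, rfl⟩ : ∃ m, k = m + 1 := ⟨k - 1, by omega⟩
    rw [Tq_rec hq0 hq1, ih (m+1) (by omega), ih m (by omega)]
    ring

end Aux3
section Main
variable {q : ℝ} (hq0 : 0 < q) (hq1 : q < 1)

lemma qnum_zeroR : qnum q (0:ℝ) = 0 := by
  rw [qnum, Real.rpow_zero]
  simp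

include hq0 hq1 in
lemma main_id (x : ℝ) (n : ℕ) :
    qnum q x ^ n = ∑ k ∈ Finset.range (n+1), qbinX q x k * Tq q n k := by
  induction n with
  | zero =>
    rw [pow_zero, Finset.sum_range_one]
    have h1 : qbinX q x 0 = 1 := by simp [qbinX, qfact]
    have h2 : Tq q 0 0 = 1 := by simp [Tq, qbin, qfact]
    rw [h1, h2, one_mul]
  | succ n ih =>
    set g : ℕ → ℝ := fun k => qnum q (k : ℝ) * qbinX q x k * Tq q n k with hg
    set h : ℕ → ℝ := fun k => q ^ (k-1) * qnum q (k : ℝ) * qbinX q x k * Tq q n (k-1) with hh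
    have lhs_eq : qnum q x ^ (n+1) =
        (∑ k ∈ Finset.range (n+1), g k) + (∑ k ∈ Finset.range (n+1), h (k+1)) := by
      rw [pow_succ, ih, Finset.sum_mul, ← Finset.sum_add_distrib]
      apply Finset.sum_congr rfl
      intro k hk
      have hsp := qnum_split hq0 hq1 x k
      have hbs := qbinX_succ hq0 hq1 x k
      calc qbinX q x k * Tq q n k * qnum q x
          = qnum q (k:ℝ) * qbinX q x k * Tq q n k
            + q ^ k * (qbinX q x k * qnum q (x - (k:ℝ))) * Tq q n k := by rw [hsp]; ring
        _ = g k + h (k+1) := by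
            rw [hbs, hg, hh]
            simp only [Nat.add_sub_cancel]
            push_cast
            ring
    have rhs_eq : ∑ k ∈ Finset.range (n+2), qbinX q x k * Tq q (n+1) k =
        (∑ k ∈ Finset.range (n+2), g k) + (∑ k ∈ Finset.range (n+2), h k) := by
      rw [← Finset.sum_add_distrib]
      apply Finset.sum_congr rfl
      intro k hk
      cases k with
      | zero =>
        have hT0 : Tq q (n+1) 0 = 0 := by
          rw [Tq, Finset.sum_range_one]
          norm_num [qnum_zeroR]
        rw [hT0, hg, hh]
        norm_num [qnum_zeroR]
      | succ m =>
        rw [Tq_rec hq0 hq1 n m, hg, hh]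
        simp only [Nat.add_sub_cancel]
        push_cast
        ring
    have hgsum : ∑ k ∈ Finset.range (n+2), g k = ∑ k ∈ Finset.range (n+1), g k := by
      rw [Finset.sum_range_succ]
      have hz : g (n+1) = 0 := by
        rw [hg]
        simp only
        rw [Tq_vanish hq0 hq1 n (n+1) (by omega)]
        ring
      rw [hz, add_zero]
    have hhsum : ∑ k ∈ Finset.range (n+2), h k = ∑ k ∈ Finset.range (n+1), h (k+1) := by
      rw [Finset.sum_range_succ']
      have hz : h 0 = 0 := by
        rw [hh]
        norm_num [qnum_zeroR]
      rw [hz, add_zero]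
    rw [rhs_eq, hgsum, hhsum, lhs_eq]

end Main

theorem stmt18 (n : ℕ) (x q : ℝ) (hq : q ∈ Set.Ioo (0:ℝ) 1) :
    qnum q x ^ n =
      ∑ k ∈ Finset.range (n + 1), q ^ k.choose 2 * qbinX q x k * qfact q k * qStir q n k := by
  obtain ⟨hq0, hq1⟩ := hq
  rw [main_id hq0 hq1 x n]
  apply Finset.sum_congr rfl
  intro k hk
  have h1 : qStir q n k = Tq q n k / (q ^ k.choose 2 * qfact q k) := rfl
  rw [h1]
  have h2 : q ^ k.choose 2 ≠ 0 := pow_ne_zero _ hq0.ne'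
  have h3 : qfact q k ≠ 0 := (qfact_pos hq0 hq1 k).ne'
  field_simp
end

section
/- For integers 1 ≤ i ≤ n, x ∈ [0,1], and q ∈ (0,1), Σ_{k=0}^i q^{C(k,2)} · qbinom(x,k) · [k]_q! · S(i,k:q) = (1/([1−x]_q + [x]_q)^{n−i}) · Σ_{k=i}^n (C(k,i)/C(n,i)) · B_{k,n}(x,q). -/
open Finset Real

namespace S19
variable {q : ℝ}


lemma qnum_natCast (q : ℝ) (m : ℕ) : qnum q (m:ℝ) = (1 - q ^ m) / (1 - q) := by
  rw [qnum, Real.rpow_natCast]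

lemma qnum_nat_zero (q : ℝ) : qnum q ((0:ℕ):ℝ) = 0 := by
  rw [qnum_natCast]; simp

lemma qnum_nat_pos (hq0 : 0 < q) (hq1 : q < 1) (m : ℕ) : 0 < qnum q ((m+1:ℕ):ℝ) := by
  rw [qnum_natCast]
  apply div_pos
  · have := pow_lt_one₀ hq0.le hq1 (Nat.succ_ne_zero m)
    simp only [Nat.succ_eq_add_one] at this
    linarith
  · linarith

lemma qfact_succ (q : ℝ) (n : ℕ) : qfact q (n+1) = qnum q ((n+1:ℕ):ℝ) * qfact q n := by
  have h : ((n+1:ℕ):ℝ) = (n:ℝ)+1 := by push_cast; ring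
  rw [qfact, h]

lemma qfact_pos (hq0 : 0 < q) (hq1 : q < 1) (n : ℕ) : 0 < qfact q n := by
  induction n with
  | zero => simp [qfact]
  | succ m ih => rw [qfact_succ]; exact mul_pos (qnum_nat_pos hq0 hq1 m) ih

lemma qsplit_nat (hq0 : 0 < q) (hq1 : q < 1) {j k : ℕ} (h : j ≤ k) :
    qnum q (k:ℝ) = qnum q (j:ℝ) + q^j * qnum q ((k-j:ℕ):ℝ) := by
  rw [qnum_natCast, qnum_natCast, qnum_natCast]
  have hqk : q^j * q^(k-j) = q^k := by rw [← pow_add, Nat.add_sub_cancel' h]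
  have h1 : (1:ℝ) - q ≠ 0 := by linarith
  field_simp
  linear_combination hqk

lemma qsplit_nat' (hq0 : 0 < q) (hq1 : q < 1) {j k : ℕ} (h : j ≤ k) :
    qnum q ((k-j:ℕ):ℝ) = qnum q (k:ℝ) - q^(k-j) * qnum q (j:ℝ) := by
  rw [qnum_natCast, qnum_natCast, qnum_natCast]
  have hqk : q^(k-j) * q^j = q^k := by rw [← pow_add, Nat.sub_add_cancel h]
  have h1 : (1:ℝ) - q ≠ 0 := by linarith
  field_simp
  linear_combination -hqk

lemma qsplit_real (hq0 : 0 < q) (k : ℕ) (x : ℝ) :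
    qnum q x = qnum q (k:ℝ) + q^k * qnum q (x - k) := by
  rw [qnum, qnum, qnum, Real.rpow_natCast]
  have hx : q ^ x = q ^ (k:ℕ) * q ^ (x - (k:ℕ)) := by
    rw [← Real.rpow_natCast q k, ← Real.rpow_add hq0]
    ring_nf
  rw [hx]
  ring

lemma qbinX_succ (hq0 : 0 < q) (hq1 : q < 1) (x : ℝ) (k : ℕ) :
    qbinX q x k * qnum q (x - k) = qnum q ((k+1:ℕ):ℝ) * qbinX q x (k+1) := by
  rw [qbinX, qbinX, prod_range_succ, qfact_succ]
  have h1 := (qfact_pos hq0 hq1 k).ne'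
  have h2 := (qnum_nat_pos hq0 hq1 k).ne'
  set N := qnum q ((k+1:ℕ):ℝ) with hN
  set F := qfact q k with hF
  set A := ∏ i ∈ Finset.range k, qnum q (x - (i : ℝ)) with hA
  field_simp

lemma qbin_zero (hq0 : 0 < q) (hq1 : q < 1) (k : ℕ) : qbin q k 0 = 1 := by
  rw [qbin]
  simp [qfact, (qfact_pos hq0 hq1 k).ne']

lemma qbin_self (hq0 : 0 < q) (hq1 : q < 1) (k : ℕ) : qbin q k k = 1 := by
  rw [qbin]
  simp [qfact, (qfact_pos hq0 hq1 k).ne']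

lemma qbin_mul (hq0 : 0 < q) (hq1 : q < 1) {j m : ℕ} (h : j ≤ m) :
    qbin q (m+1) (j+1) * qnum q ((j+1:ℕ):ℝ) = qnum q ((m+1:ℕ):ℝ) * qbin q m j := by
  rw [qbin, qbin, qfact_succ q m, qfact_succ q j, Nat.succ_sub_succ]
  have h1 := (qfact_pos hq0 hq1 m).ne'
  have h2 := (qfact_pos hq0 hq1 j).ne'
  have h3 := (qfact_pos hq0 hq1 (m - j)).ne'
  have h4 := (qnum_nat_pos hq0 hq1 j).ne'
  have h5 := (qnum_nat_pos hq0 hq1 m).ne'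
  set N1 := qnum q ((m+1:ℕ):ℝ)
  set N2 := qnum q ((j+1:ℕ):ℝ)
  field_simp

lemma qpascal (hq0 : 0 < q) (hq1 : q < 1) {j m : ℕ} (h : j + 1 ≤ m) :
    qbin q (m+1) (j+1) = qbin q m (j+1) + q^(m-j) * qbin q m j := by
  have hsub : m - j = (m - (j+1)) + 1 := by omega
  have hkey := qsplit_nat hq0 hq1 (j := m - j) (k := m + 1) (by omega)
  have hred : m + 1 - (m - j) = j + 1 := by omega
  rw [hred] at hkey
  rw [qbin, qbin, qbin, qfact_succ q m, qfact_succ q j, Nat.succ_sub_succ, hsub,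
    qfact_succ q (m - (j+1))]
  have h1 := (qfact_pos hq0 hq1 m).ne'
  have h2 := (qfact_pos hq0 hq1 j).ne'
  have h3 := (qfact_pos hq0 hq1 (m - (j+1))).ne'
  have h4 := (qnum_nat_pos hq0 hq1 j).ne'
  have h5 := (qnum_nat_pos hq0 hq1 (m - (j+1))).ne'
  have h6 : ((m - (j+1)) + 1 : ℕ) = ((m - j : ℕ)) := by omega
  rw [h6] at h5 ⊢
  set N1 := qnum q ((m+1:ℕ):ℝ)
  set N2 := qnum q ((j+1:ℕ):ℝ)
  set N3 := qnum q ((m-j:ℕ):ℝ)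
  field_simp
  linear_combination hkey
lemma qnum_zero (q : ℝ) : qnum q 0 = 0 := by rw [qnum, Real.rpow_zero]; simp
noncomputable def Tq (q : ℝ) (n k : ℕ) : ℝ :=
  ∑ j ∈ Finset.range (k + 1),
      (-1 : ℝ) ^ j * q ^ j.choose 2 * qbin q k j * qnum q ((k - j : ℕ) : ℝ) ^ n

lemma qStir_eq (q : ℝ) (n k : ℕ) : qStir q n k = Tq q n k / (q ^ k.choose 2 * qfact q k) := rfl

lemma choose_two_succ (j : ℕ) : (j+1).choose 2 = j.choose 2 + j := by
  rw [Nat.choose_succ_succ]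
  simp [Nat.choose_one_right, Nat.add_comm]

lemma Tzero (hq0 : 0 < q) (hq1 : q < 1) : ∀ k, Tq q 0 (k+1) = 0 := by
  intro k
  induction k with
  | zero =>
    rw [Tq]
    rw [Finset.sum_range_succ, Finset.sum_range_one]
    simp [qbin_zero hq0 hq1, qbin_self hq0 hq1]
  | succ k ih =>
    have step : Tq q 0 (k+2) = (1 - q^(k+1)) * Tq q 0 (k+1) := by
      have hc : ∀ j : ℕ, ((-1:ℝ))^(j+1) * q^((j+1).choose 2) = -((-1:ℝ))^j * q^(j.choose 2) * q^j := by
        intro j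
        rw [choose_two_succ, pow_add, pow_succ]
        ring
      have hmain : ∀ j ∈ Finset.range (k+1),
          (-1:ℝ)^(j+1) * q^((j+1).choose 2) * qbin q (k+2) (j+1)
            = ((-1:ℝ)^(j+1) * q^((j+1).choose 2) * qbin q (k+1) (j+1))
              + (-q^(k+1)) * ((-1:ℝ)^j * q^(j.choose 2) * qbin q (k+1) j) := by
        intro j hj
        rw [Finset.mem_range] at hj
        rw [qpascal hq0 hq1 (by omega : j + 1 ≤ k + 1)]
        have hkj : k + 1 - j = (k - j) + 1 := by omega
        rw [hkj, hc j]
        have hq' : q^(k - j + 1) * q^j = q^(k+1) := by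
          rw [← pow_add]; congr 1; omega
        linear_combination (-((-1:ℝ)^j * q^(j.choose 2) * qbin q (k+1) j)) * hq'
      have e1 : Tq q 0 (k+1)
          = (∑ j ∈ Finset.range (k+1), (-1:ℝ)^(j+1) * q^((j+1).choose 2) * qbin q (k+1) (j+1)) + 1 := by
        rw [Tq]
        simp only [pow_zero, mul_one]
        rw [Finset.sum_range_succ']
        norm_num [qbin_zero hq0 hq1]
      have e2 : Tq q 0 (k+1)
          = (∑ j ∈ Finset.range (k+1), (-1:ℝ)^j * q^(j.choose 2) * qbin q (k+1) j)
            + (-1:ℝ)^(k+1) * q^((k+1).choose 2) := by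
        rw [Tq]
        simp only [pow_zero, mul_one]
        rw [Finset.sum_range_succ]
        norm_num [qbin_self hq0 hq1]
      have hck : (-1:ℝ)^(k+2) * q^((k+2).choose 2)
          = -((-1:ℝ)^(k+1)) * q^((k+1).choose 2) * q^(k+1) := by
        have h' := hc (k+1)
        calc (-1:ℝ)^(k+2) * q^((k+2).choose 2) = (-1:ℝ)^(k+1+1) * q^((k+1+1).choose 2) := by norm_num
        _ = -(-1:ℝ)^(k+1) * q^((k+1).choose 2) * q^(k+1) := h'
        _ = -((-1:ℝ)^(k+1)) * q^((k+1).choose 2) * q^(k+1) := by ring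
      have expand : Tq q 0 (k+2)
          = (∑ j ∈ Finset.range (k+1),
              (((-1:ℝ)^(j+1) * q^((j+1).choose 2) * qbin q (k+1) (j+1))
                + (-q^(k+1)) * ((-1:ℝ)^j * q^(j.choose 2) * qbin q (k+1) j)))
            + (-1:ℝ)^(k+2) * q^((k+2).choose 2) + 1 := by
        rw [Tq]
        simp only [pow_zero, mul_one]
        rw [Finset.sum_range_succ', Finset.sum_range_succ, Finset.sum_congr rfl hmain]
        norm_num [qbin_zero hq0 hq1, qbin_self hq0 hq1]
      rw [expand, Finset.sum_add_distrib, ← Finset.mul_sum]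
      linear_combination (-1:ℝ) * e1 + hck + q^(k+1) * e2
    rw [step, ih, mul_zero]

lemma neg_q_choose (q:ℝ) (j:ℕ) :
    (-1:ℝ)^(j+1) * q^((j+1).choose 2) = -(-1:ℝ)^j * q^(j.choose 2) * q^j := by
  rw [choose_two_succ, pow_add, pow_succ]
  ring

lemma Trec (hq0 : 0 < q) (hq1 : q < 1) (i m : ℕ) :
    Tq q (i+1) (m+1) = qnum q ((m+1:ℕ):ℝ) * Tq q i (m+1)
      + qnum q ((m+1:ℕ):ℝ) * q^m * Tq q i m := by
  have key : ∀ j ∈ Finset.range (m+2),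
      (-1:ℝ)^j * q^(j.choose 2) * qbin q (m+1) j * qnum q ((m+1-j:ℕ):ℝ)^(i+1)
        = qnum q ((m+1:ℕ):ℝ) * ((-1:ℝ)^j * q^(j.choose 2) * qbin q (m+1) j * qnum q ((m+1-j:ℕ):ℝ)^i)
          - ((-1:ℝ)^j * q^(j.choose 2) * qbin q (m+1) j * q^(m+1-j) * qnum q (j:ℝ) * qnum q ((m+1-j:ℕ):ℝ)^i) := by
    intro j hj
    rw [Finset.mem_range] at hj
    have h := qsplit_nat' hq0 hq1 (j := j) (k := m+1) (by omega)
    rw [pow_succ]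
    linear_combination ((-1:ℝ)^j * q^(j.choose 2) * qbin q (m+1) j * qnum q ((m+1-j:ℕ):ℝ)^i) * h
  have hB : ∑ j ∈ Finset.range (m+2),
        ((-1:ℝ)^j * q^(j.choose 2) * qbin q (m+1) j * q^(m+1-j) * qnum q (j:ℝ) * qnum q ((m+1-j:ℕ):ℝ)^i)
      = -(q^m * qnum q ((m+1:ℕ):ℝ) * Tq q i m) := by
    rw [Finset.sum_range_succ']
    have hterm : ∀ j ∈ Finset.range (m+1),
        (-1:ℝ)^(j+1) * q^((j+1).choose 2) * qbin q (m+1) (j+1) * q^(m+1-(j+1)) * qnum q ((j+1:ℕ):ℝ) * qnum q ((m+1-(j+1):ℕ):ℝ)^i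
          = -(q^m * qnum q ((m+1:ℕ):ℝ)) * ((-1:ℝ)^j * q^(j.choose 2) * qbin q m j * qnum q ((m-j:ℕ):ℝ)^i) := by
      intro j hj
      rw [Finset.mem_range] at hj
      have hc3 : (m+1-(j+1):ℕ) = (m-j:ℕ) := by omega
      rw [hc3, neg_q_choose]
      have hbm := qbin_mul hq0 hq1 (j := j) (m := m) (by omega)
      have hq' : q^j * q^(m-j) = q^m := by rw [← pow_add]; congr 1; omega
      calc -(-1:ℝ)^j * q^(j.choose 2) * q^j * qbin q (m+1) (j+1) * q^(m-j) * qnum q ((j+1:ℕ):ℝ) * qnum q ((m-j:ℕ):ℝ)^i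
          = -((-1:ℝ)^j * q^(j.choose 2) * (q^j * q^(m-j)) * (qbin q (m+1) (j+1) * qnum q ((j+1:ℕ):ℝ)) * qnum q ((m-j:ℕ):ℝ)^i) := by ring
        _ = -((-1:ℝ)^j * q^(j.choose 2) * q^m * (qnum q ((m+1:ℕ):ℝ) * qbin q m j) * qnum q ((m-j:ℕ):ℝ)^i) := by rw [hbm, hq']
        _ = -(q^m * qnum q ((m+1:ℕ):ℝ)) * ((-1:ℝ)^j * q^(j.choose 2) * qbin q m j * qnum q ((m-j:ℕ):ℝ)^i) := by ring
    rw [Finset.sum_congr rfl hterm, ← Finset.mul_sum, ← Tq]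
    norm_num [qnum_zero]
  rw [Tq, Finset.sum_congr rfl key, Finset.sum_sub_distrib, ← Finset.mul_sum, hB, ← Tq]
  ring

lemma Tq_vanish (hq0 : 0 < q) (hq1 : q < 1) : ∀ i k, i < k → Tq q i k = 0 := by
  intro i
  induction i with
  | zero =>
    intro k hk
    obtain ⟨k', rfl⟩ : ∃ k', k = k' + 1 := ⟨k - 1, by omega⟩
    exact Tzero hq0 hq1 k'
  | succ i ih =>
    intro k hk
    obtain ⟨m, rfl⟩ : ∃ m, k = m + 1 := ⟨k - 1, by omega⟩
    rw [Trec hq0 hq1, ih (m+1) (by omega), ih m (by omega)]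
    ring

lemma qStir_rec (hq0 : 0 < q) (hq1 : q < 1) (i m : ℕ) :
    qStir q (i+1) (m+1) = qStir q i m + qnum q ((m+1:ℕ):ℝ) * qStir q i (m+1) := by
  rw [qStir_eq, qStir_eq, qStir_eq, Trec hq0 hq1]
  have h1 := (qfact_pos hq0 hq1 m).ne'
  have h2 := (qfact_pos hq0 hq1 (m+1)).ne'
  have h3 : q ≠ 0 := hq0.ne'
  have hch : ((m+1).choose 2) = m.choose 2 + m := choose_two_succ m
  rw [qfact_succ q m, hch, pow_add]
  set N := qnum q ((m+1:ℕ):ℝ) with hN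
  have h4 : N ≠ 0 := (qnum_nat_pos hq0 hq1 m).ne'
  field_simp
  ring
lemma partA (hq0 : 0 < q) (hq1 : q < 1) (x : ℝ) : ∀ i,
    ∑ k ∈ Finset.range (i + 1), q ^ k.choose 2 * qbinX q x k * qfact q k * qStir q i k
      = qnum q x ^ i := by
  intro i
  induction i with
  | zero =>
    rw [Finset.sum_range_one]
    have h1 : qStir q 0 0 = 1 := by
      rw [qStir_eq, Tq]
      simp [qbin_self hq0 hq1, qfact]
    rw [h1]
    simp [qbinX, qfact]
  | succ i ih =>
    have akey : ∀ k : ℕ, qnum q x * (q^(k.choose 2) * qbinX q x k * qfact q k)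
        = qnum q (k:ℝ) * (q^(k.choose 2) * qbinX q x k * qfact q k)
          + q^((k+1).choose 2) * qbinX q x (k+1) * qfact q (k+1) := by
      intro k
      rw [qsplit_real hq0 k x, choose_two_succ, pow_add, qfact_succ]
      have hbx := qbinX_succ hq0 hq1 x k
      linear_combination (q^(k.choose 2) * q^k * qfact q k) * hbx
    rw [Finset.sum_range_succ']
    have hf0 : q ^ (Nat.choose 0 2) * qbinX q x 0 * qfact q 0 * qStir q (i+1) 0 = 0 := by
      have h0 : qStir q (i+1) 0 = 0 := by
        rw [qStir_eq, Tq]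
        simp [qnum_zero]
      rw [h0, mul_zero]
    rw [hf0, add_zero]
    have hstep : ∀ k ∈ Finset.range (i+1),
        q^((k+1).choose 2) * qbinX q x (k+1) * qfact q (k+1) * qStir q (i+1) (k+1)
          = q^((k+1).choose 2) * qbinX q x (k+1) * qfact q (k+1) * qStir q i k
            + qnum q ((k+1:ℕ):ℝ) * (q^((k+1).choose 2) * qbinX q x (k+1) * qfact q (k+1)) * qStir q i (k+1) := by
      intro k _
      rw [qStir_rec hq0 hq1]
      ring
    rw [Finset.sum_congr rfl hstep, Finset.sum_add_distrib]
    have hS2 : ∑ k ∈ Finset.range (i+1),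
          qnum q ((k+1:ℕ):ℝ) * (q^((k+1).choose 2) * qbinX q x (k+1) * qfact q (k+1)) * qStir q i (k+1)
        = ∑ k ∈ Finset.range (i+1),
          qnum q (k:ℝ) * (q^(k.choose 2) * qbinX q x k * qfact q k) * qStir q i k := by
      set G : ℕ → ℝ := fun k => qnum q (k:ℝ) * (q^(k.choose 2) * qbinX q x k * qfact q k) * qStir q i k with hG
      have h1 := Finset.sum_range_succ' G (i+1)
      have h2 := Finset.sum_range_succ G (i+1)
      have hG0 : G 0 = 0 := by
        simp [hG, qnum_zero]
      have hGi : G (i+1) = 0 := by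
        have : qStir q i (i+1) = 0 := by
          rw [qStir_eq, Tq_vanish hq0 hq1 i (i+1) (by omega)]
          simp
        simp [hG, this]
      have : ∑ k ∈ Finset.range (i+1), G (k+1) = ∑ k ∈ Finset.range (i+1), G k := by
        have := h1.symm.trans h2
        rw [hG0, hGi] at this
        linarith
      exact this
    rw [hS2]
    have hrhs : qnum q x ^ (i+1) = ∑ k ∈ Finset.range (i+1),
        (qnum q (k:ℝ) * (q^(k.choose 2) * qbinX q x k * qfact q k) * qStir q i k
          + q^((k+1).choose 2) * qbinX q x (k+1) * qfact q (k+1) * qStir q i k) := by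
      rw [pow_succ, ← ih, Finset.sum_mul]
      refine Finset.sum_congr rfl (fun k _ => ?_)
      linear_combination (qStir q i k) * akey k
    rw [hrhs, Finset.sum_add_distrib]
    ring
lemma partB (i n : ℕ) (hin : i ≤ n) (x : ℝ) :
    ∑ k ∈ Finset.Icc i n, ((k.choose i : ℝ) / (n.choose i : ℝ)) * qB k n x q
      = qnum q x ^ i * (qnum q (1-x) + qnum q x) ^ (n-i) := by
  have hn0 : (0:ℝ) < (n.choose i : ℝ) := by exact_mod_cast Nat.choose_pos hin
  set a := qnum q x
  set b := qnum q (1-x)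
  have hterm : ∀ k ∈ Finset.Icc i n,
      ((k.choose i : ℝ) / (n.choose i : ℝ)) * qB k n x q
        = ((n-i).choose (k-i) : ℝ) * (a^k * b^(n-k)) := by
    intro k hk
    rw [Finset.mem_Icc] at hk
    rw [qB]
    have hc := Nat.choose_mul (n := n) hk.1
    have hc' : (n.choose k : ℝ) * (k.choose i : ℝ)
        = (n.choose i : ℝ) * ((n-i).choose (k-i) : ℝ) := by exact_mod_cast hc
    field_simp
    linear_combination (a^k * b^(n-k)) * hc'
  rw [Finset.sum_congr rfl hterm, ← Finset.Ico_add_one_right_eq_Icc, Finset.sum_Ico_eq_sum_range]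
  have hr : n + 1 - i = (n - i) + 1 := by omega
  rw [hr]
  have hterm2 : ∀ j ∈ Finset.range ((n-i)+1),
      ((n-i).choose (i + j - i) : ℝ) * (a^(i+j) * b^(n-(i+j)))
        = a^i * (a^j * b^((n-i)-j) * ((n-i).choose j : ℝ)) := by
    intro j hj
    rw [Finset.mem_range] at hj
    have h1 : i + j - i = j := by omega
    have h2 : n - (i + j) = (n - i) - j := by omega
    rw [h1, h2, pow_add]
    ring
  rw [Finset.sum_congr rfl hterm2, ← Finset.mul_sum, ← add_pow, add_comm a b]
end S19

theorem stmt19 (i n : ℕ) (hi : 1 ≤ i) (hin : i ≤ n) (x q : ℝ)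
    (hx : x ∈ Set.Icc (0:ℝ) 1) (hq : q ∈ Set.Ioo (0:ℝ) 1) :
    ∑ k ∈ Finset.range (i + 1), q ^ k.choose 2 * qbinX q x k * qfact q k * qStir q i k =
      (1 / (qnum q (1 - x) + qnum q x) ^ (n - i)) *
        ∑ k ∈ Finset.Icc i n, ((k.choose i : ℝ) / (n.choose i : ℝ)) * qB k n x q := by
  obtain ⟨hq0, hq1⟩ := hq
  obtain ⟨hx0, hx1⟩ := hx
  rw [S19.partA hq0 hq1 x i, S19.partB i n hin x]
  have h1q : (0:ℝ) < 1 - q := by linarith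
  have hD : 0 < qnum q (1-x) + qnum q x := by
    have hb : 0 ≤ qnum q (1-x) := by
      apply div_nonneg _ h1q.le
      have := Real.rpow_le_one hq0.le hq1.le (by linarith : (0:ℝ) ≤ 1 - x)
      linarith
    rcases eq_or_lt_of_le hx0 with h|h
    · have hx' : (1:ℝ) - x = 1 := by rw [← h]; ring
      have hb1 : qnum q (1-x) = 1 := by
        rw [hx', qnum, Real.rpow_one, div_self h1q.ne']
      have ha0 : qnum q x = 0 := by rw [← h, qnum, Real.rpow_zero]; simp
      rw [hb1, ha0]; norm_num
    · have ha : 0 < qnum q x := by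
        apply div_pos _ h1q
        have := Real.rpow_lt_one hq0.le hq1 h
        linarith
      linarith
  have hDn : (qnum q (1-x) + qnum q x) ^ (n-i) ≠ 0 := (pow_pos hD _).ne'
  field_simp
end
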